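/- (Knots have degree 2) Let Q₀ be the rewriting set built from a friendly Thue system Π (rules ①–⑥), in which every lower index l_p, r_p occurs in exactly the two associated rewriting rules for production p. If two red edges H(S,a,b) and H(S',a',b) of C^{Q₀} form a married couple (created by the same rewriting step) with knot b, then b has degree exactly 2 in C^{Q₀}. -/

import Mathlib

/-!  S-warms and s-warm rewriting, following Gogacz–Marcinkowski,
"The Hunt for a Red Spider".  Labels are abstract ideal s-piders: a color
(`true` = green, `false` = red) together with an empty-or-singleton upper lame
index and lower lame index.  An edge `(S, a, b)` of a s-warm is the atom
`H(S, a, b)` with tail `a` and antenna `b`. -/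

namespace Swarm

/-- Abstract ideal s-piders `𝔸_s`. -/
abbrev ISp (s : ℕ) := Bool × Option (Fin s) × Option (Fin s)

/-- A labeled edge of a s-warm: label, tail, antenna. -/
abbrev Edge (s : ℕ) (V : Type*) := ISp s × V × V

/-- `x ⊆ y` for empty-or-singleton sets coded as `Option`. -/
def osub {s : ℕ} (x y : Option (Fin s)) : Prop := ∀ i : Fin s, x = some i → y = some i

/-- `y ∖ x` for empty-or-singleton sets coded as `Option` (assuming `x ⊆ y`). -/
def odiff {s : ℕ} (y x : Option (Fin s)) : Option (Fin s) :=
  match x with | none => y | some _ => none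

/-- The action of the s-pider query `f^I_J` (indices `IJ`) on labels:
`f^I_J(S^{I'}_{J'}) = S^{I∖I'}_{J∖J'}` of the opposite color, defined iff
`I' ⊆ I` and `J' ⊆ J`. -/
def LabStep {s : ℕ} (IJ : Option (Fin s) × Option (Fin s)) (p p' : ISp s) : Prop :=
  osub p.2.1 IJ.1 ∧ osub p.2.2 IJ.2 ∧
  p' = (!p.1, odiff IJ.1 p.2.1, odiff IJ.2 p.2.2)

/-- A binary s-pider rewriting rule `f ∧↑ f'` (`wedge = true`: shared antenna)
or `f ∨↑ f'` (`wedge = false`: shared tail), given by the index pairs of its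
two s-pider query components. -/
structure BRule (s : ℕ) where
  wedge : Bool
  f : Option (Fin s) × Option (Fin s)
  f' : Option (Fin s) × Option (Fin s)

/-- The vertices of a s-warm. -/
def verts {s : ℕ} {V : Type*} (D : Set (Edge s V)) : Set V :=
  {v | ∃ e ∈ D, v = e.2.1 ∨ v = e.2.2}

/-- One execution of the rewriting rule `Q` in the s-warm `D`, with input edges
`e1, e2` (same color, sharing antenna resp. tail), creating a fresh vertex and the
two output edges `o1, o2` of the opposite color, provided no witness already
exists; `D'` is the resulting s-warm. -/
def SwStepAt {s : ℕ} {V : Type*} (Q : BRule s) (D : Set (Edge s V))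
    (e1 e2 o1 o2 : Edge s V) (D' : Set (Edge s V)) : Prop :=
  e1 ∈ D ∧ e2 ∈ D ∧ e1.1.1 = e2.1.1 ∧
  LabStep Q.f e1.1 o1.1 ∧ LabStep Q.f' e2.1 o2.1 ∧
  (if Q.wedge then
    e1.2.2 = e2.2.2 ∧ o1.2.1 = e1.2.1 ∧ o2.2.1 = e2.2.1 ∧ o1.2.2 = o2.2.2 ∧
      o1.2.2 ∉ verts D ∧
      ¬ ∃ c, (o1.1, e1.2.1, c) ∈ D ∧ (o2.1, e2.2.1, c) ∈ D
  else
    e1.2.1 = e2.2.1 ∧ o1.2.2 = e1.2.2 ∧ o2.2.2 = e2.2.2 ∧ o1.2.1 = o2.2.1 ∧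
      o1.2.1 ∉ verts D ∧
      ¬ ∃ c, (o1.1, c, e1.2.2) ∈ D ∧ (o2.1, c, e2.2.2) ∈ D) ∧
  D' = D ∪ {o1, o2}

/-- The `ToDo` set of a s-warm: the rule instances that can still be executed. -/
def SwToDo {s : ℕ} {V : Type*} (𝒬 : Set (BRule s)) (D : Set (Edge s V)) :
    Set (BRule s × Edge s V × Edge s V) :=
  {q | q.1 ∈ 𝒬 ∧ ∃ o1 o2 D', SwStepAt q.1 D q.2.1 q.2.2 o1 o2 D'}

/-- Union of the stages strictly below `i`. -/
def partUnion {X : Type*} (seq : Ordinal.{0} → Set X) (i : Ordinal.{0}) : Set X :=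
  ⋃ j ∈ Set.Iio i, seq j

/-- A fair rewriting (chase) sequence for the rule set `𝒬` starting from `D0`. -/
structure SwChase {s : ℕ} {V : Type*} (𝒬 : Set (BRule s)) (D0 : Set (Edge s V)) where
  len : Ordinal.{0}
  pos : 0 < len
  seq : Ordinal.{0} → Set (Edge s V)
  init : seq 0 = D0
  step : ∀ i, 0 < i → i < len →
    ∃ q ∈ SwToDo 𝒬 (partUnion seq i), ∃ o1 o2,
      SwStepAt q.1 (partUnion seq i) q.2.1 q.2.2 o1 o2 (seq i)
  fair : ∀ i < len, ∀ q ∈ SwToDo 𝒬 (partUnion seq i),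
    ∃ k, i < k ∧ k ≤ len ∧ q ∉ SwToDo 𝒬 (partUnion seq k)

/-- The result `chase(𝒬, D0)` of a rewriting sequence. -/
def SwChase.result {s : ℕ} {V : Type*} {𝒬 : Set (BRule s)} {D0 : Set (Edge s V)}
    (C : SwChase 𝒬 D0) : Set (Edge s V) := partUnion C.seq C.len

/-- The green full s-pider label. -/
def greenFull (s : ℕ) : ISp s := (true, none, none)

/-- The red full s-pider label. -/
def redFull (s : ℕ) : ISp s := (false, none, none)

/-- The initial s-warm `D_{green}`: a single edge labeled with the green full
s-pider. -/
def D0green (s : ℕ) {V : Type*} (s0 t0 : V) : Set (Edge s V) :=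
  {((true, none, none), s0, t0)}

end Swarm

namespace Swarm

/-- A friendly Thue system `Π = Π_< ∪ Π_=` over the alphabet `{1,…,s} = Fin s`,
together with the bookkeeping data (fresh lower indices) used to build the
rewriting set `𝒬₀` (rules ①–⑥) and rule ⑦.
`Peq` is the (symmetric) set of productions of `Π_=`, each a pair of two-letter
words `((i,j),(i',j'))`; `Π_<` always consists of `{η₀, β₀η₁}` and `{η₁, β₁η₀}`. -/
structure Friendly (s : ℕ) where
  α : Fin s
  β0 : Fin s
  η0 : Fin s
  β1 : Fin s
  η1 : Fin s
  γ : Fin s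
  γ' : Fin s
  Peq : Set ((Fin s × Fin s) × (Fin s × Fin s))
  /-- the six lower indices of the rules ①–③ -/
  l : Fin 6 → Fin s
  /-- the lower index `l_p` of the rules for production `p` -/
  lp : (Fin s × Fin s) × (Fin s × Fin s) → Fin s
  /-- the lower index `r_p` of the rules for production `p` -/
  rp : (Fin s × Fin s) × (Fin s × Fin s) → Fin s
  /-- the lower index `r` of rule ⑦ -/
  r7 : Fin s
  hα : Even (α : ℕ)
  hβ0 : Even (β0 : ℕ)
  hη0 : Even (η0 : ℕ)
  hβ1 : Odd (β1 : ℕ)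
  hη1 : Odd (η1 : ℕ)
  hγ : Odd (γ : ℕ)
  hγ' : Even (γ' : ℕ)
  /-- `Π_=` is symmetric (productions are unordered pairs) -/
  symm : ∀ p ∈ Peq, (p.2, p.1) ∈ Peq
  /-- parity condition of friendliness -/
  parity : ∀ p ∈ Peq,
    (Odd (p.1.1 : ℕ) ∧ Odd (p.2.1 : ℕ) ∧ Even (p.1.2 : ℕ) ∧ Even (p.2.2 : ℕ)) ∨
    (Even (p.1.1 : ℕ) ∧ Even (p.2.1 : ℕ) ∧ Odd (p.1.2 : ℕ) ∧ Odd (p.2.2 : ℕ))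
  /-- no production of the form `{ij, ij'}` or `{ij, i'j}` -/
  nodup : ∀ p ∈ Peq, p.1.1 ≠ p.2.1 ∧ p.1.2 ≠ p.2.2
  /-- no production involves `α` -/
  noα : ∀ p ∈ Peq, α ≠ p.1.1 ∧ α ≠ p.1.2 ∧ α ≠ p.2.1 ∧ α ≠ p.2.2
  /-- no production of `Π_=` involves `η₀` -/
  noη0 : ∀ p ∈ Peq, η0 ≠ p.1.1 ∧ η0 ≠ p.1.2 ∧ η0 ≠ p.2.1 ∧ η0 ≠ p.2.2
  /-- no production of `Π_=` involves `η₁` -/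
  noη1 : ∀ p ∈ Peq, η1 ≠ p.1.1 ∧ η1 ≠ p.1.2 ∧ η1 ≠ p.2.1 ∧ η1 ≠ p.2.2
  /-- `γ` and `γ'` occur in exactly one production, of the form `{ii', γγ'}` -/
  γprod : ∃ q ∈ Peq, q.2 = (γ, γ') ∧
    ∀ p ∈ Peq,
      (γ = p.1.1 ∨ γ = p.1.2 ∨ γ = p.2.1 ∨ γ = p.2.2 ∨
       γ' = p.1.1 ∨ γ' = p.1.2 ∨ γ' = p.2.1 ∨ γ' = p.2.2) →
      p = q ∨ p = (q.2, q.1)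
  fin : Peq.Finite
  /-- `s > 2|Π|` (with `|Π| = Peq.ncard/2 + 2` unordered productions) -/
  size : Peq.ncard + 4 < s
  linj : Function.Injective l
  lpswap : ∀ p, lp (p.2, p.1) = lp p
  rpswap : ∀ p, rp (p.2, p.1) = rp p
  /-- the indices `l_p, r_p` are fresh -/
  fresh : ∀ p ∈ Peq, (∀ k, lp p ≠ l k ∧ rp p ≠ l k) ∧ lp p ≠ rp p ∧
    lp p ≠ r7 ∧ rp p ≠ r7
  lpdisj : ∀ p ∈ Peq, ∀ q ∈ Peq, lp p ≠ rp q
  lrinj : ∀ p ∈ Peq, ∀ q ∈ Peq, (lp p = lp q ∨ rp p = rp q) →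
    q = p ∨ q = (p.2, p.1)
  r7l : ∀ k, r7 ≠ l k

variable {s : ℕ}

/-- Rule ①A: `f_1 ∧↑ f_2`. -/
def Friendly.r1A (F : Friendly s) : BRule s :=
  ⟨true, (none, some (F.l 0)), (none, some (F.l 1))⟩
/-- Rule ①B: `f^α_1 ∧↑ f^{η₁}_2`. -/
def Friendly.r1B (F : Friendly s) : BRule s :=
  ⟨true, (some F.α, some (F.l 0)), (some F.η1, some (F.l 1))⟩
/-- Rule ②A: `f^{η₀}_3 ∧↑ f_4`. -/
def Friendly.r2A (F : Friendly s) : BRule s :=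
  ⟨true, (some F.η0, some (F.l 2)), (none, some (F.l 3))⟩
/-- Rule ②B: `f^{β₀}_3 ∧↑ f^{η₁}_4`. -/
def Friendly.r2B (F : Friendly s) : BRule s :=
  ⟨true, (some F.β0, some (F.l 2)), (some F.η1, some (F.l 3))⟩
/-- Rule ③A: `f^{η₁}_5 ∨↑ f_6`. -/
def Friendly.r3A (F : Friendly s) : BRule s :=
  ⟨false, (some F.η1, some (F.l 4)), (none, some (F.l 5))⟩
/-- Rule ③B: `f^{β₁}_5 ∨↑ f^{η₀}_6`. -/
def Friendly.r3B (F : Friendly s) : BRule s :=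
  ⟨false, (some F.β1, some (F.l 4)), (some F.η0, some (F.l 5))⟩

/-- First associated rule for a `Π_=` production `p = {ij, i'j'}`:
`f^i_{l_p} ∧↑ f^j_{r_p}` if `i` is even, `f^i_{l_p} ∨↑ f^j_{r_p}` if `i` is odd. -/
def Friendly.rA (F : Friendly s) (p : (Fin s × Fin s) × (Fin s × Fin s)) : BRule s :=
  ⟨decide (Even ((p.1.1 : ℕ))), (some p.1.1, some (F.lp p)), (some p.1.2, some (F.rp p))⟩

/-- Second associated rule for a `Π_=` production `p = {ij, i'j'}`:
`f^{i'}_{l_p} ∧↑ f^{j'}_{r_p}` if `i` is even, `∨↑` if `i` is odd. -/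
def Friendly.rB (F : Friendly s) (p : (Fin s × Fin s) × (Fin s × Fin s)) : BRule s :=
  ⟨decide (Even ((p.1.1 : ℕ))), (some p.2.1, some (F.lp p)), (some p.2.2, some (F.rp p))⟩

/-- The rewriting set `𝒬₀` (rules ①–⑥). -/
def Friendly.Q0 (F : Friendly s) : Set (BRule s) :=
  {F.r1A, F.r1B, F.r2A, F.r2B, F.r3A, F.r3B} ∪
  {Q | ∃ p ∈ F.Peq, Q = F.rA p ∨ Q = F.rB p}

/-- Rule ⑦: `f^γ ∨↑ f^{γ'}_r`. -/
def Friendly.rule7 (F : Friendly s) : BRule s :=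
  ⟨false, (some F.γ, none), (some F.γ', some F.r7)⟩

/-- The full rewriting set `𝒬 = 𝒬₀ ∪ {⑦}`. -/
def Friendly.Qfull (F : Friendly s) : Set (BRule s) := F.Q0 ∪ {F.rule7}

/-- The association between rules: `①A/①B`, `②A/②B`, `③A/③B` and, for each
`Π_=` production `p`, the two rules for `p`. -/
def Friendly.Assoc (F : Friendly s) : Set (BRule s × BRule s) :=
  {(F.r1A, F.r1B), (F.r1B, F.r1A), (F.r2A, F.r2B), (F.r2B, F.r2A),
   (F.r3A, F.r3B), (F.r3B, F.r3A)} ∪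
  {q | ∃ p ∈ F.Peq, q = (F.rA p, F.rB p) ∨ q = (F.rB p, F.rA p)}

/-- The `Π_=` productions of a friendly system, as pairs of two-letter words. -/
def Friendly.PeqW (F : Friendly s) : Set (List (Fin s) × List (Fin s)) :=
  {q | ∃ p ∈ F.Peq, q = ([p.1.1, p.1.2], [p.2.1, p.2.2])}

/-- The `Π_<` productions `{η₀, β₀η₁}` and `{η₁, β₁η₀}`, as pairs of words
(in both orientations). -/
def Friendly.PltW (F : Friendly s) : Set (List (Fin s) × List (Fin s)) :=
  {([F.η0], [F.β0, F.η1]), ([F.β0, F.η1], [F.η0]),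
   ([F.η1], [F.β1, F.η0]), ([F.β1, F.η0], [F.η1])}

/-- All productions of `Π`, as pairs of words. -/
def Friendly.PiW (F : Friendly s) : Set (List (Fin s) × List (Fin s)) :=
  F.PeqW ∪ F.PltW

/-- One Thue rewriting step: replace an occurrence of `t` by `t'` for a
production `(t, t') ∈ P`. -/
def ThueStep {A : Type*} (P : Set (List A × List A)) (w w' : List A) : Prop :=
  ∃ u v t t', (t, t') ∈ P ∧ w = u ++ t ++ v ∧ w' = u ++ t' ++ v

/-- `o1, o2` are a married couple created (by rule `f`) at stage `i` of the
fair rewriting sequence `C`. -/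
def MarriedBy {V : Type*} {𝒬 : Set (BRule s)} {D0 : Set (Edge s V)}
    (C : SwChase 𝒬 D0) (i : Ordinal.{0}) (f : BRule s) (o1 o2 : Edge s V) : Prop :=
  0 < i ∧ i < C.len ∧ f ∈ 𝒬 ∧
  ∃ e1 e2, SwStepAt f (partUnion C.seq i) e1 e2 o1 o2 (C.seq i)

end Swarm

namespace Swarm

variable {s : ℕ}

lemma mem_partUnion {X : Type*} {seq : Ordinal.{0} → Set X} {i : Ordinal.{0}} {x : X} :
    x ∈ partUnion seq i ↔ ∃ j < i, x ∈ seq j := by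
  simp [partUnion]

lemma mem_Q0_iff (F : Friendly s) {Q : BRule s} :
    Q ∈ F.Q0 ↔ (Q = F.r1A ∨ Q = F.r1B ∨ Q = F.r2A ∨ Q = F.r2B ∨ Q = F.r3A ∨ Q = F.r3B)
      ∨ ∃ p ∈ F.Peq, Q = F.rA p ∨ Q = F.rB p := by
  simp [Friendly.Q0, Set.mem_insert_iff]

lemma Q0_some (F : Friendly s) {Q : BRule s} (hQ : Q ∈ F.Q0) :
    (∃ x, Q.f.2 = some x) ∧ ∃ y, Q.f'.2 = some y := by
  rw [mem_Q0_iff] at hQ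
  rcases hQ with (rfl|rfl|rfl|rfl|rfl|rfl) | ⟨p, hp, rfl|rfl⟩ <;>
    exact ⟨⟨_, rfl⟩, _, rfl⟩

lemma Q0_f_ne_f' (F : Friendly s) {Q : BRule s} (hQ : Q ∈ F.Q0) : Q.f.2 ≠ Q.f'.2 := by
  rw [mem_Q0_iff] at hQ
  rcases hQ with (rfl|rfl|rfl|rfl|rfl|rfl) | ⟨p, hp, rfl|rfl⟩ <;>
    simp only [Friendly.r1A, Friendly.r1B, Friendly.r2A, Friendly.r2B, Friendly.r3A,
      Friendly.r3B, Friendly.rA, Friendly.rB, ne_eq, Option.some.injEq] <;>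
    first
      | exact fun h => absurd (F.linj h) (by decide)
      | exact (F.fresh p hp).2.1

lemma classify (F : Friendly s) {Q : BRule s} (hQ : Q ∈ F.Q0) {x : Fin s}
    (hx : Q.f.2 = some x ∨ Q.f'.2 = some x) :
    (∃ k : Fin 6, x = F.l k ∧ Q.wedge = decide ((k : ℕ) < 4)) ∨
    (∃ p ∈ F.Peq, (x = F.lp p ∨ x = F.rp p) ∧ Q.wedge = decide (Even ((p.1.1 : ℕ)))) := by
  rw [mem_Q0_iff] at hQ
  rcases hQ with (rfl|rfl|rfl|rfl|rfl|rfl) | ⟨p, hp, rfl|rfl⟩ <;>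
    rcases hx with hx | hx <;>
    simp only [Friendly.r1A, Friendly.r1B, Friendly.r2A, Friendly.r2B, Friendly.r3A,
      Friendly.r3B, Friendly.rA, Friendly.rB, Option.some.injEq] at hx <;>
    subst hx
  · exact Or.inl ⟨0, rfl, by simp only [Friendly.r1A, Friendly.r1B, Friendly.r2A, Friendly.r2B, Friendly.r3A, Friendly.r3B]; decide⟩
  · exact Or.inl ⟨1, rfl, by simp only [Friendly.r1A, Friendly.r1B, Friendly.r2A, Friendly.r2B, Friendly.r3A, Friendly.r3B]; decide⟩
  · exact Or.inl ⟨0, rfl, by simp only [Friendly.r1A, Friendly.r1B, Friendly.r2A, Friendly.r2B, Friendly.r3A, Friendly.r3B]; decide⟩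
  · exact Or.inl ⟨1, rfl, by simp only [Friendly.r1A, Friendly.r1B, Friendly.r2A, Friendly.r2B, Friendly.r3A, Friendly.r3B]; decide⟩
  · exact Or.inl ⟨2, rfl, by simp only [Friendly.r1A, Friendly.r1B, Friendly.r2A, Friendly.r2B, Friendly.r3A, Friendly.r3B]; decide⟩
  · exact Or.inl ⟨3, rfl, by simp only [Friendly.r1A, Friendly.r1B, Friendly.r2A, Friendly.r2B, Friendly.r3A, Friendly.r3B]; decide⟩
  · exact Or.inl ⟨2, rfl, by simp only [Friendly.r1A, Friendly.r1B, Friendly.r2A, Friendly.r2B, Friendly.r3A, Friendly.r3B]; decide⟩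
  · exact Or.inl ⟨3, rfl, by simp only [Friendly.r1A, Friendly.r1B, Friendly.r2A, Friendly.r2B, Friendly.r3A, Friendly.r3B]; decide⟩
  · exact Or.inl ⟨4, rfl, by simp only [Friendly.r1A, Friendly.r1B, Friendly.r2A, Friendly.r2B, Friendly.r3A, Friendly.r3B]; decide⟩
  · exact Or.inl ⟨5, rfl, by simp only [Friendly.r1A, Friendly.r1B, Friendly.r2A, Friendly.r2B, Friendly.r3A, Friendly.r3B]; decide⟩
  · exact Or.inl ⟨4, rfl, by simp only [Friendly.r1A, Friendly.r1B, Friendly.r2A, Friendly.r2B, Friendly.r3A, Friendly.r3B]; decide⟩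
  · exact Or.inl ⟨5, rfl, by simp only [Friendly.r1A, Friendly.r1B, Friendly.r2A, Friendly.r2B, Friendly.r3A, Friendly.r3B]; decide⟩
  · exact Or.inr ⟨p, hp, Or.inl rfl, rfl⟩
  · exact Or.inr ⟨p, hp, Or.inr rfl, rfl⟩
  · exact Or.inr ⟨p, hp, Or.inl rfl, rfl⟩
  · exact Or.inr ⟨p, hp, Or.inr rfl, rfl⟩

lemma parity_fst (F : Friendly s) {p} (hp : p ∈ F.Peq) :
    (Even ((p.1.1 : ℕ)) ↔ Even ((p.2.1 : ℕ))) := by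
  rcases F.parity p hp with ⟨h1, h2, -⟩ | ⟨h1, h2, -⟩ <;>
    simp [Nat.even_iff, Nat.odd_iff] at h1 h2 ⊢ <;> omega

lemma sep (F : Friendly s) {f Q : BRule s} (hf : f ∈ F.Q0) (hQ : Q ∈ F.Q0)
    (hw : f.wedge ≠ Q.wedge) {x : Fin s}
    (hfx : f.f.2 = some x ∨ f.f'.2 = some x)
    (hQx : Q.f.2 = some x ∨ Q.f'.2 = some x) : False := by
  rcases classify F hf hfx with ⟨k, rfl, hk⟩ | ⟨p, hp, hxp, hkp⟩
  · rcases classify F hQ hQx with ⟨k', hk', h2⟩ | ⟨q, hq, hxq, h2⟩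
    · cases F.linj hk'
      exact hw (hk.trans h2.symm)
    · rcases hxq with h | h
      · exact ((F.fresh q hq).1 k).1 h.symm
      · exact ((F.fresh q hq).1 k).2 h.symm
  · rcases classify F hQ hQx with ⟨k, hk, h2⟩ | ⟨q, hq, hxq, h2⟩
    · rcases hxp with h | h
      · exact ((F.fresh p hp).1 k).1 (h.symm.trans hk)
      · exact ((F.fresh p hp).1 k).2 (h.symm.trans hk)
    · have hpar : q = p ∨ q = (p.2, p.1) → False := by
        rintro (rfl | rfl)
        · exact hw (hkp.trans h2.symm)
        · refine hw (hkp.trans ?_)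
          rw [h2]
          exact (decide_eq_decide.mpr (parity_fst F hp)).symm ▸ rfl
      rcases hxp with h1 | h1 <;> rcases hxq with h2' | h2'
      · exact hpar (F.lrinj p hp q hq (Or.inl (h1.symm.trans h2')))
      · exact F.lpdisj p hp q hq (h1.symm.trans h2')
      · exact F.lpdisj q hq p hp (h2'.symm.trans h1)
      · exact hpar (F.lrinj p hp q hq (Or.inr (h1.symm.trans h2')))

lemma lab_color (F : Friendly s) {IJ : Option (Fin s) × Option (Fin s)}
    (hIJ : ∃ x, IJ.2 = some x) {p p' : ISp s} (h : LabStep IJ p p')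
    (hp : p.1 = true ↔ p.2.2 = none) : p'.1 = true ↔ p'.2.2 = none := by
  obtain ⟨x, hx⟩ := hIJ
  obtain ⟨-, -, heq⟩ := h
  subst heq
  cases hb : p.1
  · have : p.2.2 ≠ none := fun hn => by simp [hb, hn] at hp
    obtain ⟨y, hy⟩ := Option.ne_none_iff_exists'.mp this
    simp [hy, odiff, hx]
  · have hn : p.2.2 = none := hp.mp hb
    simp [hn, odiff, hx]

lemma chase_color {V : Type*} (F : Friendly s) {s0 t0 : V}
    (C : SwChase F.Q0 (D0green s s0 t0)) :
    ∀ j < C.len, ∀ e ∈ C.seq j, (e.1.1 = true ↔ e.1.2.2 = none) := by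
  intro j
  induction j using Ordinal.induction with
  | _ j IH =>
  intro hj e he
  rcases (zero_le (a := j)).eq_or_lt with rfl | h0
  · rw [C.init] at he
    simp only [D0green, Set.mem_singleton_iff] at he
    subst he
    simp
  · obtain ⟨q, hq, n1, n2, hst⟩ := C.step j h0 hj
    obtain ⟨hd1, hd2, -, hL1, hL2, -, hD'⟩ := hst
    have hPU : ∀ e' ∈ partUnion C.seq j, (e'.1.1 = true ↔ e'.1.2.2 = none) := by
      intro e' he'
      rcases mem_partUnion.mp he' with ⟨k, hk, hek⟩
      exact IH k hk (hk.trans hj) e' hek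
    rw [hD'] at he
    simp only [Set.mem_union, Set.mem_insert_iff, Set.mem_singleton_iff] at he
    rcases he with he | rfl | rfl
    · exact hPU e he
    · exact lab_color F (Q0_some F hq.1).1 hL1 (hPU _ hd1)
    · exact lab_color F (Q0_some F hq.1).2 hL2 (hPU _ hd2)

end Swarm

open Swarm in
/-- **Knots have degree 2.**  In `C^{𝒬₀} = chase(𝒬₀, D_green)` for
`𝒬₀` built from a friendly Thue system, if two red edges form a married couple
(created in the same rewriting step, by rule `f`), then their knot (the fresh
shared vertex) has degree exactly 2 in `C^{𝒬₀}`. -/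
theorem knot_degree_two {V : Type*} {s : ℕ} (F : Friendly s) (s0 t0 : V)
    (hne : s0 ≠ t0) (C : SwChase F.Q0 (D0green s s0 t0))
    (i : Ordinal.{0}) (f : BRule s) (o1 o2 : Edge s V)
    (hmar : MarriedBy C i f o1 o2) (hred : o1.1.1 = false) :
    {e ∈ C.result |
        e.2.1 = (if f.wedge then o1.2.2 else o1.2.1) ∨
        e.2.2 = (if f.wedge then o1.2.2 else o1.2.1)}.encard = 2 := by
  
  obtain ⟨hi0, hiL, hfQ, e1, e2, hstep⟩ := hmar
  obtain ⟨he1, he2, hcol, hL1, hL2, hifs, hDi⟩ := hstep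
  set b := (if f.wedge then o1.2.2 else o1.2.1) with hb
  clear_value b
  have hL1eq := hL1.2.2
  have hL2eq := hL2.2.2
  have he1col : e1.1.1 = true := by
    have h : o1.1.1 = !e1.1.1 := by rw [hL1eq]
    rw [hred] at h
    cases hc : e1.1.1
    · simp [hc] at h
    · rfl
  have he2col : e2.1.1 = true := hcol ▸ he1col
  have hinv : ∀ j ≤ C.len, ∀ e ∈ partUnion C.seq j, (e.1.1 = true ↔ e.1.2.2 = none) := by
    intro j hj e he
    rcases mem_partUnion.mp he with ⟨k, hk, hek⟩
    exact chase_color F C k (lt_of_lt_of_le hk hj) e hek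
  have he1low : e1.1.2.2 = none := (hinv i hiL.le e1 he1).mp he1col
  have he2low : e2.1.2.2 = none := (hinv i hiL.le e2 he2).mp he2col
  obtain ⟨⟨x1, hx1⟩, x2, hx2⟩ := Q0_some F hfQ
  have ho1low : o1.1.2.2 = some x1 := by
    rw [hL1eq]
    show odiff f.f.2 e1.1.2.2 = some x1
    rw [he1low]; exact hx1
  have ho2low : o2.1.2.2 = some x2 := by
    rw [hL2eq]
    show odiff f.f'.2 e2.1.2.2 = some x2
    rw [he2low]; exact hx2
  have hv1 : e1.2.1 ∈ verts (partUnion C.seq i) := ⟨e1, he1, Or.inl rfl⟩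
  have hv2 : e2.2.1 ∈ verts (partUnion C.seq i) := ⟨e2, he2, Or.inl rfl⟩
  have hw1 : e1.2.2 ∈ verts (partUnion C.seq i) := ⟨e1, he1, Or.inr rfl⟩
  have hw2 : e2.2.2 ∈ verts (partUnion C.seq i) := ⟨e2, he2, Or.inr rfl⟩
  have hfacts : b ∉ verts (partUnion C.seq i) ∧
      (o1.2.1 = b ∨ o1.2.2 = b) ∧ (o2.2.1 = b ∨ o2.2.2 = b) ∧
      (f.wedge = true → o1.2.1 ≠ b ∧ o2.2.1 ≠ b) ∧
      (f.wedge = false → o1.2.2 ≠ b ∧ o2.2.2 ≠ b) := by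
    cases hfw : f.wedge
    · simp only [hfw, Bool.false_eq_true, if_false] at hifs hb
      obtain ⟨h1, h2, h3, h4, h5, h6⟩ := hifs
      subst hb
      refine ⟨h5, Or.inl rfl, Or.inl h4.symm, by simp [hfw], fun _ => ⟨?_, ?_⟩⟩
      · rw [h2]; intro hc; exact h5 (hc ▸ hw1)
      · rw [h3]; intro hc; exact h5 (hc ▸ hw2)
    · simp only [hfw, if_true] at hifs hb
      obtain ⟨h1, h2, h3, h4, h5, h6⟩ := hifs
      subst hb
      refine ⟨h5, Or.inr rfl, Or.inr h4.symm, fun _ => ⟨?_, ?_⟩, by simp [hfw]⟩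
      · rw [h2]; intro hc; exact h5 (hc ▸ hv1)
      · rw [h3]; intro hc; exact h5 (hc ▸ hv2)
  obtain ⟨hbfresh, ho1b, ho2b, hnbw, hnbv⟩ := hfacts
  have noatb : ∀ e ∈ partUnion C.seq i, ¬(e.2.1 = b ∨ e.2.2 = b) := by
    rintro e he (h | h)
    · exact hbfresh ⟨e, he, Or.inl h.symm⟩
    · exact hbfresh ⟨e, he, Or.inr h.symm⟩
  have ho1i : o1 ∈ C.seq i := by rw [hDi]; simp
  have ho2i : o2 ∈ C.seq i := by rw [hDi]; simp
  have key : ∀ j < C.len, ∀ e ∈ C.seq j, (e.2.1 = b ∨ e.2.2 = b) → e = o1 ∨ e = o2 := by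
    intro j
    induction j using Ordinal.induction with
    | _ j IH =>
    intro hj e he hatb
    have hPU : ∀ e' ∈ partUnion C.seq j, (e'.2.1 = b ∨ e'.2.2 = b) → e' = o1 ∨ e' = o2 := by
      intro e' he' hab
      rcases mem_partUnion.mp he' with ⟨k, hk, hek⟩
      rcases lt_or_ge k i with hki | hki
      · exact absurd hab (noatb e' (mem_partUnion.mpr ⟨k, hki, hek⟩))
      · exact IH k hk (hk.trans hj) e' hek hab
    rcases lt_trichotomy j i with hji | rfl | hij
    · exact absurd hatb (noatb e (mem_partUnion.mpr ⟨j, hji, he⟩))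
    · rw [hDi] at he
      simp only [Set.mem_union, Set.mem_insert_iff, Set.mem_singleton_iff] at he
      rcases he with he | rfl | rfl
      · exact absurd hatb (noatb e he)
      · exact Or.inl rfl
      · exact Or.inr rfl
    · obtain ⟨⟨Q', d1, d2⟩, hq, n1, n2, hst⟩ := C.step j (hi0.trans hij) hj
      have hqQ : Q' ∈ F.Q0 := hq.1
      obtain ⟨hd1, hd2, -, hL1', hL2', hifs', hD'⟩ := hst
      have hbv : b ∈ verts (partUnion C.seq j) := by
        refine ⟨o1, mem_partUnion.mpr ⟨i, hij, ho1i⟩, ?_⟩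
        rcases ho1b with h | h
        · exact Or.inl h.symm
        · exact Or.inr h.symm
      have hsepd : ∀ dd : Edge s V, dd = o1 ∨ dd = o2 →
          ∀ IJ : Option (Fin s) × Option (Fin s), IJ = Q'.f ∨ IJ = Q'.f' →
          f.wedge ≠ Q'.wedge → osub dd.1.2.2 IJ.2 → False := by
        rintro dd (rfl | rfl) IJ hIJ hw hsub
        · have h := hsub x1 ho1low
          refine sep F hfQ hqQ hw (Or.inl hx1) ?_
          rcases hIJ with rfl | rfl
          exacts [Or.inl h, Or.inr h]
        · have h := hsub x2 ho2low
          refine sep F hfQ hqQ hw (Or.inr hx2) ?_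
          rcases hIJ with rfl | rfl
          exacts [Or.inl h, Or.inr h]
      rw [hD'] at he
      simp only [Set.mem_union, Set.mem_insert_iff, Set.mem_singleton_iff] at he
      rcases he with he | rfl | rfl
      · exact hPU e he hatb
      · exfalso
        cases hqw : Q'.wedge
        · simp only [hqw, Bool.false_eq_true, if_false] at hifs'
          obtain ⟨g1, g2, g3, g4, g5, -⟩ := hifs'
          rcases hatb with h | h
          · rw [← h] at hbv; exact g5 hbv
          · have hd := hPU d1 hd1 (Or.inr (g2.symm.trans h))
            cases hfw : f.wedge
            · rcases hd with rfl | rfl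
              · exact (hnbv hfw).1 (g2.symm.trans h)
              · exact (hnbv hfw).2 (g2.symm.trans h)
            · exact hsepd d1 hd Q'.f (Or.inl rfl) (by simp [hfw, hqw]) hL1'.2.1
        · simp only [hqw, if_true] at hifs'
          obtain ⟨g1, g2, g3, g4, g5, -⟩ := hifs'
          rcases hatb with h | h
          · have hd := hPU d1 hd1 (Or.inl (g2.symm.trans h))
            cases hfw : f.wedge
            · exact hsepd d1 hd Q'.f (Or.inl rfl) (by simp [hfw, hqw]) hL1'.2.1
            · rcases hd with rfl | rfl
              · exact (hnbw hfw).1 (g2.symm.trans h)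
              · exact (hnbw hfw).2 (g2.symm.trans h)
          · rw [← h] at hbv; exact g5 hbv
      · exfalso
        cases hqw : Q'.wedge
        · simp only [hqw, Bool.false_eq_true, if_false] at hifs'
          obtain ⟨g1, g2, g3, g4, g5, -⟩ := hifs'
          rcases hatb with h | h
          · rw [← h, ← g4] at hbv; exact g5 hbv
          · have hd := hPU d2 hd2 (Or.inr (g3.symm.trans h))
            cases hfw : f.wedge
            · rcases hd with rfl | rfl
              · exact (hnbv hfw).1 (g3.symm.trans h)
              · exact (hnbv hfw).2 (g3.symm.trans h)
            · exact hsepd d2 hd Q'.f' (Or.inr rfl) (by simp [hfw, hqw]) hL2'.2.1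
        · simp only [hqw, if_true] at hifs'
          obtain ⟨g1, g2, g3, g4, g5, -⟩ := hifs'
          rcases hatb with h | h
          · have hd := hPU d2 hd2 (Or.inl (g3.symm.trans h))
            cases hfw : f.wedge
            · exact hsepd d2 hd Q'.f' (Or.inr rfl) (by simp [hfw, hqw]) hL2'.2.1
            · rcases hd with rfl | rfl
              · exact (hnbw hfw).1 (g3.symm.trans h)
              · exact (hnbw hfw).2 (g3.symm.trans h)
          · rw [← h, ← g4] at hbv; exact g5 hbv
  have hne12 : o1 ≠ o2 := by
    intro h
    have hx : (some x1 : Option (Fin s)) = some x2 := by rw [← ho1low, ← ho2low, h]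
    exact Q0_f_ne_f' F hfQ (hx1.trans (hx.trans hx2.symm))
  have hset : {e ∈ C.result | e.2.1 = b ∨ e.2.2 = b} = {o1, o2} := by
    ext e
    simp only [Set.mem_setOf_eq, Set.mem_insert_iff, Set.mem_singleton_iff, SwChase.result]
    constructor
    · rintro ⟨heR, hab⟩
      rcases mem_partUnion.mp heR with ⟨j, hj, hej⟩
      exact key j hj e hej hab
    · rintro (rfl | rfl)
      · exact ⟨mem_partUnion.mpr ⟨i, hiL, ho1i⟩, ho1b⟩
      · exact ⟨mem_partUnion.mpr ⟨i, hiL, ho2i⟩, ho2b⟩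
  rw [hset]
  exact Set.encard_pair hne12
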